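/- Let G be a finite group and ψ a 2-cocycle on G with values in ℂˣ. An element g ∈ G is ψ-regular if and only if there exists a finite-dimensional irreducible module τ over the twisted group algebra ℂ_ψG such that χ_τ(g) ≠ 0. -/

import Mathlib

/-- A 2-cocycle on `G` with values in `ℂˣ` (trivial action). -/
def IsTwoCocycle {G : Type*} [Group G] (ψ : G → G → ℂˣ) : Prop :=
  ∀ g h k : G, ψ g h * ψ (g * h) k = ψ h k * ψ g (h * k)

/-- An element `g` is `ψ`-regular if `ψ(g,h) = ψ(h,g)` for every `h` in the
centralizer of `g`. -/
def IsPsiRegular {G : Type*} [Group G] (ψ : G → G → ℂˣ) (g : G) : Prop :=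
  ∀ h ∈ Subgroup.centralizer {g}, ψ g h = ψ h g

/-- A finite-dimensional module over the twisted group algebra `ℂ_ψ G`,
packaged as a projective representation: a finite-dimensional complex vector
space `V` together with operators `ρ g` satisfying
`ρ g * ρ h = ψ(g,h) • ρ(g h)` and (unitality of the module) `ρ 1 = ψ(1,1) • 1`. -/
structure TwistedGroupAlgebraModule (G : Type*) [Group G] (ψ : G → G → ℂˣ) where
  V : Type
  [isAddCommGroup : AddCommGroup V]
  [isModule : Module ℂ V]
  [isFinDim : FiniteDimensional ℂ V]
  ρ : G → Module.End ℂ V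
  mul_eq : ∀ g h : G, ρ g * ρ h = (ψ g h : ℂ) • ρ (g * h)
  one_eq : ρ 1 = (ψ 1 1 : ℂ) • 1

attribute [instance] TwistedGroupAlgebraModule.isAddCommGroup
  TwistedGroupAlgebraModule.isModule TwistedGroupAlgebraModule.isFinDim

/-- The character of a module over `ℂ_ψ G`: `χ_τ(g) = tr (g|_τ)`. -/
noncomputable def TwistedGroupAlgebraModule.char {G : Type*} [Group G]
    {ψ : G → G → ℂˣ} (τ : TwistedGroupAlgebraModule G ψ) (g : G) : ℂ :=
  LinearMap.trace ℂ τ.V (τ.ρ g)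

/-- A `ℂ_ψ G`-module is irreducible if it is nonzero and has no nontrivial
invariant subspaces. -/
def TwistedGroupAlgebraModule.Irreducible {G : Type*} [Group G]
    {ψ : G → G → ℂˣ} (τ : TwistedGroupAlgebraModule G ψ) : Prop :=
  Nontrivial τ.V ∧
    ∀ p : Submodule ℂ τ.V, (∀ g : G, p.map (τ.ρ g) ≤ p) → p = ⊥ ∨ p = ⊤

section CocycleLemmas
variable {G : Type*} [Group G] {ψ : G → G → ℂˣ} (hψ : IsTwoCocycle ψ)
include hψ

lemma psi_one_left (k : G) : ψ 1 k = ψ 1 1 := by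
  have := hψ 1 1 k
  simp only [one_mul] at this
  exact (mul_right_cancel this).symm

lemma psi_one_right (k : G) : ψ k 1 = ψ 1 1 := by
  have := hψ k 1 1
  simp only [mul_one, one_mul] at this
  exact mul_right_cancel this

lemma psi_inv_comm (h : G) : ψ h h⁻¹ = ψ h⁻¹ h := by
  have := hψ h h⁻¹ h
  simp only [mul_inv_cancel, inv_mul_cancel] at this
  rw [psi_one_left hψ h, psi_one_right hψ h] at this
  exact mul_right_cancel this

/-- key commuting identity -/
lemma psi_key_comm {g h : G} (hc : g * h = h * g) :
    ψ g h * ψ (h * g) h⁻¹ = ψ h h⁻¹ * ψ 1 1 := by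
  have := hψ g h h⁻¹
  rw [hc, mul_inv_cancel, psi_one_right hψ] at this
  exact this

/-- key scalar identity for conjugation reindexing -/
lemma psi_key_conj (k h : G) :
    ψ k h * ψ (k * h) ((k*h)⁻¹) = ψ ((k*h)⁻¹) k * ψ h h⁻¹ := by
  have h1 := hψ (k*h) (k*h)⁻¹ k
  rw [mul_inv_cancel, psi_one_left hψ, show (k*h)⁻¹ * k = h⁻¹ by group] at h1
  have h3 := hψ k h h⁻¹
  rw [mul_inv_cancel, psi_one_right hψ] at h3
  apply Units.ext
  have h1' := congrArg (Units.val) h1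
  have h3' := congrArg (Units.val) h3
  push_cast at h1' h3' ⊢
  have ho : ((ψ 1 1 : ℂˣ) : ℂ) ≠ 0 := Units.ne_zero _
  apply mul_right_cancel₀ ho
  linear_combination ((ψ ((k*h)⁻¹) k : ℂˣ) : ℂ) * h3' + ((ψ k h : ℂˣ) : ℂ) * h1'

/-- the scalar identity in `ℂ` in the form used for conjugation reindexing -/
lemma psi_key_conj' (k h : G) :
    (((ψ h h⁻¹ * ψ 1 1)⁻¹ : ℂˣ) : ℂ) * ((ψ k h : ℂˣ) : ℂ) =
      (((ψ (k*h) (k*h)⁻¹ * ψ 1 1)⁻¹ : ℂˣ) : ℂ) * ((ψ ((k*h)⁻¹) k : ℂˣ) : ℂ) := by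
  have := congrArg (Units.val) (psi_key_conj hψ k h)
  push_cast at this ⊢
  field_simp at this ⊢
  linear_combination this
end CocycleLemmas

namespace TwistedGroupAlgebraModule
variable {G : Type*} [Group G] {ψ : G → G → ℂˣ}

lemma rho_mul_inv (τ : TwistedGroupAlgebraModule G ψ) (h : G) :
    τ.ρ h * τ.ρ h⁻¹ = ((ψ h h⁻¹ * ψ 1 1 : ℂˣ) : ℂ) • 1 := by
  rw [τ.mul_eq, mul_inv_cancel, τ.one_eq, smul_smul]
  push_cast; ring_nf

lemma rho_inv_mul (hψ : IsTwoCocycle ψ) (τ : TwistedGroupAlgebraModule G ψ) (h : G) :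
    τ.ρ h⁻¹ * τ.ρ h = ((ψ h h⁻¹ * ψ 1 1 : ℂˣ) : ℂ) • 1 := by
  have := τ.rho_mul_inv h⁻¹
  rw [inv_inv] at this
  rw [this, psi_inv_comm hψ h]

/-- conjugation of an endomorphism by `ρ h` (with the correct normalizing scalar). -/
noncomputable def conjTerm (τ : TwistedGroupAlgebraModule G ψ) (h : G)
    (f : Module.End ℂ τ.V) : Module.End ℂ τ.V :=
  (((ψ h h⁻¹ * ψ 1 1)⁻¹ : ℂˣ) : ℂ) • (τ.ρ h * f * τ.ρ h⁻¹)

lemma conjTerm_rho_comm (hψ : IsTwoCocycle ψ) (τ : TwistedGroupAlgebraModule G ψ)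
    (k h : G) (f : Module.End ℂ τ.V) :
    τ.ρ k * τ.conjTerm h f = τ.conjTerm (k*h) f * τ.ρ k := by
  rw [conjTerm, conjTerm, mul_smul_comm, smul_mul_assoc]
  have l1 : τ.ρ k * (τ.ρ h * f * τ.ρ h⁻¹) =
      ((ψ k h : ℂˣ) : ℂ) • (τ.ρ (k*h) * f * τ.ρ h⁻¹) := by
    rw [mul_assoc (τ.ρ h) f, ← mul_assoc (τ.ρ k), τ.mul_eq, smul_mul_assoc, mul_assoc]
  have l2 : τ.ρ (k*h) * f * τ.ρ (k*h)⁻¹ * τ.ρ k =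
      ((ψ ((k*h)⁻¹) k : ℂˣ) : ℂ) • (τ.ρ (k*h) * f * τ.ρ h⁻¹) := by
    rw [mul_assoc, τ.mul_eq, show (k*h)⁻¹ * k = h⁻¹ by group, mul_smul_comm]
  rw [l1, l2, smul_smul, smul_smul, psi_key_conj' hψ k h]

/-- conjTerm fixes vectors of an invariant subspace pointwise (for f a projection onto it). -/
lemma conjTerm_apply (τ : TwistedGroupAlgebraModule G ψ) (h : G)
    (f : Module.End ℂ τ.V) (v : τ.V) :
    τ.conjTerm h f v = (((ψ h h⁻¹ * ψ 1 1)⁻¹ : ℂˣ) : ℂ) • τ.ρ h (f (τ.ρ h⁻¹ v)) := rfl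

/-- trace of a conjugated endomorphism -/
lemma trace_conjTerm (hψ : IsTwoCocycle ψ) (τ : TwistedGroupAlgebraModule G ψ)
    (h : G) (f : Module.End ℂ τ.V) :
    LinearMap.trace ℂ τ.V (τ.conjTerm h f) = LinearMap.trace ℂ τ.V f := by
  rw [conjTerm, map_smul, mul_assoc, LinearMap.trace_mul_comm, mul_assoc,
    rho_inv_mul hψ, mul_smul_comm, mul_one, map_smul, smul_eq_mul, smul_eq_mul,
    ← mul_assoc]
  have h1 : ((ψ h h⁻¹:ℂˣ):ℂ) ≠ 0 := Units.ne_zero _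
  have h2 : ((ψ 1 1:ℂˣ):ℂ) ≠ 0 := Units.ne_zero _
  push_cast
  field_simp

end TwistedGroupAlgebraModule
namespace TwistedGroupAlgebraModule
variable {G : Type*} [Group G] {ψ : G → G → ℂˣ}

section Fin
variable [Fintype G]

/-- The central "averaged conjugates of `ρ g`" operator. -/
noncomputable def Bop (τ : TwistedGroupAlgebraModule G ψ) (g : G) : Module.End ℂ τ.V :=
  ∑ h : G, τ.conjTerm h (τ.ρ g)

lemma rho_comm_Bop (hψ : IsTwoCocycle ψ) (τ : TwistedGroupAlgebraModule G ψ) (g k : G) :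
    τ.ρ k * τ.Bop g = τ.Bop g * τ.ρ k := by
  rw [Bop, Finset.mul_sum, Finset.sum_mul]
  simp_rw [conjTerm_rho_comm hψ]
  exact Fintype.sum_equiv (Equiv.mulLeft k) _ _ (fun h => rfl)

lemma trace_Bop (hψ : IsTwoCocycle ψ) (τ : TwistedGroupAlgebraModule G ψ) (g : G) :
    LinearMap.trace ℂ τ.V (τ.Bop g) = (Fintype.card G : ℂ) * τ.char g := by
  rw [Bop, map_sum]
  simp_rw [trace_conjTerm hψ]
  simp [char, Finset.sum_const, mul_comm]

end Fin

lemma conjTerm_mem (τ : TwistedGroupAlgebraModule G ψ) {p : Submodule ℂ τ.V}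
    (hp : ∀ k : G, p.map (τ.ρ k) ≤ p) (h : G) {f : Module.End ℂ τ.V}
    (hf : ∀ v ∈ p, f v ∈ p) {v : τ.V} (hv : v ∈ p) : τ.conjTerm h f v ∈ p := by
  rw [conjTerm_apply]
  exact p.smul_mem _ (hp h ⟨_, hf _ (hp h⁻¹ ⟨v, hv, rfl⟩), rfl⟩)

lemma Bop_mem [Fintype G] (τ : TwistedGroupAlgebraModule G ψ) {p : Submodule ℂ τ.V}
    (hp : ∀ k : G, p.map (τ.ρ k) ≤ p) (g : G) {v : τ.V} (hv : v ∈ p) :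
    τ.Bop g v ∈ p := by
  rw [Bop, LinearMap.sum_apply]
  exact Submodule.sum_mem p fun h _ =>
    τ.conjTerm_mem hp h (fun w hw => hp g ⟨w, hw, rfl⟩) hv

/-- Restriction of a module to an invariant subspace. -/
noncomputable def resMod (τ : TwistedGroupAlgebraModule G ψ) (p : Submodule ℂ τ.V)
    (hp : ∀ k : G, p.map (τ.ρ k) ≤ p) : TwistedGroupAlgebraModule G ψ where
  V := p
  ρ g := (τ.ρ g).restrict (p := p) (q := p) (fun x hx => hp g ⟨x, hx, rfl⟩)
  mul_eq g h := by
    ext x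
    have := LinearMap.congr_fun (τ.mul_eq g h) (x : τ.V)
    simpa [LinearMap.restrict_apply, Module.End.mul_apply] using this
  one_eq := by
    ext x
    have := LinearMap.congr_fun τ.one_eq (x : τ.V)
    simpa [LinearMap.restrict_apply] using this

lemma resMod_Bop_apply [Fintype G] (τ : TwistedGroupAlgebraModule G ψ)
    (p : Submodule ℂ τ.V) (hp : ∀ k : G, p.map (τ.ρ k) ≤ p) (g : G) (x : p) :
    p.subtype ((τ.resMod p hp).Bop g x) = τ.Bop g (x : τ.V) := by
  have hs := LinearMap.sum_apply Finset.univ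
    (fun h => (τ.resMod p hp).conjTerm h ((τ.resMod p hp).ρ g)) x
  rw [Bop]
  erw [hs]
  erw [map_sum]
  rw [Bop, LinearMap.sum_apply]
  refine Finset.sum_congr rfl fun h _ => ?_
  rfl

end TwistedGroupAlgebraModule
namespace TwistedGroupAlgebraModule
variable {G : Type*} [Group G] {ψ : G → G → ℂˣ}

/-- Maschke: every invariant subspace has an invariant complement. -/
lemma exists_invariant_compl [Fintype G] (hψ : IsTwoCocycle ψ)
    (τ : TwistedGroupAlgebraModule G ψ) (p : Submodule ℂ τ.V)
    (hp : ∀ k : G, p.map (τ.ρ k) ≤ p) :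
    ∃ q : Submodule ℂ τ.V, (∀ k : G, q.map (τ.ρ k) ≤ q) ∧ p ⊓ q = ⊥ ∧ p ⊔ q = ⊤ := by
  obtain ⟨q0, hq0⟩ := Submodule.exists_isCompl p
  set π : Module.End ℂ τ.V := p.subtype ∘ₗ (p.projectionOnto q0 hq0) with hπ
  have hπ_mem : ∀ v, π v ∈ p := fun v => (p.projectionOnto q0 hq0 v).2
  have hπ_id : ∀ v ∈ p, π v = v := by
    intro v hv
    have := Submodule.linearProjOfIsCompl_apply_left hq0 ⟨v, hv⟩
    simp only [hπ, LinearMap.comp_apply, this]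
    rfl
  set e : Module.End ℂ τ.V := (Fintype.card G : ℂ)⁻¹ • ∑ h : G, τ.conjTerm h π with he
  have hcard : (Fintype.card G : ℂ) ≠ 0 := Nat.cast_ne_zero.2 Fintype.card_ne_zero
  have hrho_mem : ∀ (k : G) (v : τ.V), v ∈ p → τ.ρ k v ∈ p :=
    fun k v hv => hp k ⟨v, hv, rfl⟩
  have hterm_mem : ∀ (h : G) (v : τ.V), τ.conjTerm h π v ∈ p := by
    intro h v
    rw [conjTerm_apply]
    exact p.smul_mem _ (hrho_mem h _ (hπ_mem _))
  have he_mem : ∀ v, e v ∈ p := by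
    intro v
    rw [he, LinearMap.smul_apply, LinearMap.sum_apply]
    exact p.smul_mem _ (Submodule.sum_mem p fun h _ => hterm_mem h v)
  have hterm_id : ∀ (h : G) (v : τ.V), v ∈ p → τ.conjTerm h π v = v := by
    intro h v hv
    rw [conjTerm_apply, hπ_id _ (hrho_mem h⁻¹ v hv)]
    have := LinearMap.congr_fun (τ.rho_mul_inv h) v
    rw [Module.End.mul_apply] at this
    rw [this]
    simp only [LinearMap.smul_apply, Module.End.one_apply, smul_smul]
    rw [← Units.val_mul, inv_mul_cancel, Units.val_one, one_smul]
  have he_id : ∀ v ∈ p, e v = v := by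
    intro v hv
    rw [he, LinearMap.smul_apply, LinearMap.sum_apply]
    rw [Finset.sum_congr rfl (fun h _ => hterm_id h v hv)]
    simp only [Finset.sum_const, Finset.card_univ]
    rw [← Nat.cast_smul_eq_nsmul ℂ, smul_smul, inv_mul_cancel₀ hcard, one_smul]
  have he_comm : ∀ k, τ.ρ k * e = e * τ.ρ k := by
    intro k
    rw [he, mul_smul_comm, smul_mul_assoc, Finset.mul_sum, Finset.sum_mul]
    congr 1
    simp_rw [conjTerm_rho_comm hψ]
    exact Fintype.sum_equiv (Equiv.mulLeft k) _ _ (fun h => rfl)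
  refine ⟨LinearMap.ker e, ?_, ?_, ?_⟩
  · intro k
    rintro x ⟨v, hv, rfl⟩
    rw [SetLike.mem_coe] at hv
    rw [LinearMap.mem_ker] at hv ⊢
    have : e (τ.ρ k v) = τ.ρ k (e v) := by
      have := LinearMap.congr_fun (he_comm k) v
      rw [Module.End.mul_apply, Module.End.mul_apply] at this
      exact this.symm
    rw [this, hv, map_zero]
  · rw [eq_bot_iff]
    rintro x ⟨hxp, hxk⟩
    rw [Submodule.mem_bot]
    have := he_id x hxp
    rw [LinearMap.mem_ker.1 hxk] at this
    exact this.symm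
  · rw [eq_top_iff]
    intro v _
    refine Submodule.mem_sup.2 ⟨e v, he_mem v, v - e v, ?_, by abel⟩
    rw [LinearMap.mem_ker, map_sub, he_id _ (he_mem v), sub_self]

/-- Schur: a central operator on an irreducible module is a scalar. -/
lemma central_scalar (τ : TwistedGroupAlgebraModule G ψ) (hirr : τ.Irreducible)
    (f : Module.End ℂ τ.V) (hf : ∀ k : G, τ.ρ k * f = f * τ.ρ k) :
    ∃ lam : ℂ, f = lam • 1 := by
  haveI := hirr.1
  obtain ⟨lam, hev⟩ := Module.End.exists_eigenvalue f
  refine ⟨lam, ?_⟩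
  have hinv : ∀ k : G, (Module.End.eigenspace f lam).map (τ.ρ k) ≤
      Module.End.eigenspace f lam := by
    intro k
    rintro x ⟨v, hv, rfl⟩
    rw [SetLike.mem_coe] at hv
    rw [Module.End.mem_eigenspace_iff] at hv ⊢
    have h1 : f (τ.ρ k v) = τ.ρ k (f v) := by
      have := LinearMap.congr_fun (hf k) v
      rw [Module.End.mul_apply, Module.End.mul_apply] at this
      exact this.symm
    rw [h1, hv, map_smul]
  have hE : Module.End.eigenspace f lam = ⊤ := by
    rcases hirr.2 _ hinv with h | h
    · exact absurd h (Module.End.hasEigenvalue_iff.1 hev)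
    · exact h
  ext v
  have hv : v ∈ Module.End.eigenspace f lam := hE ▸ Submodule.mem_top
  rw [Module.End.mem_eigenspace_iff] at hv
  simpa using hv

end TwistedGroupAlgebraModule
namespace TwistedGroupAlgebraModule
variable {G : Type*} [Group G] {ψ : G → G → ℂˣ}

/-- The regular module of the twisted group algebra, realized on `Fin (card G) → ℂ`. -/
noncomputable def regMod (hψ : IsTwoCocycle ψ) [Fintype G]
    (eqv : G ≃ Fin (Fintype.card G)) : TwistedGroupAlgebraModule G ψ where
  V := Fin (Fintype.card G) → ℂ
  ρ y :=
    { toFun := fun f j => ((ψ y (y⁻¹ * eqv.symm j) : ℂˣ) : ℂ) * f (eqv (y⁻¹ * eqv.symm j))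
      map_add' := by intro f1 f2; funext j; simp [mul_add]
      map_smul' := by intro c f; funext j; simp [smul_eq_mul]; ring }
  mul_eq g h := by
    refine LinearMap.ext fun f => funext fun j => ?_
    simp only [Module.End.mul_apply, LinearMap.smul_apply, LinearMap.coe_mk, AddHom.coe_mk,
      Pi.smul_apply, smul_eq_mul, Equiv.symm_apply_apply]
    rw [show h⁻¹ * (g⁻¹ * eqv.symm j) = (g*h)⁻¹ * eqv.symm j by group]
    have hco := congrArg Units.val (hψ g h ((g*h)⁻¹ * eqv.symm j))
    push_cast at hco
    rw [show h * ((g*h)⁻¹ * eqv.symm j) = g⁻¹ * eqv.symm j by group] at hco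
    linear_combination (- f (eqv ((g*h)⁻¹ * eqv.symm j))) * hco
  one_eq := by
    refine LinearMap.ext fun f => funext fun j => ?_
    simp only [LinearMap.coe_mk, AddHom.coe_mk, LinearMap.smul_apply, Module.End.one_apply,
      Pi.smul_apply, smul_eq_mul, inv_one, one_mul, Equiv.apply_symm_apply]
    rw [psi_one_left hψ]

lemma regMod_rho_apply (hψ : IsTwoCocycle ψ) [Fintype G]
    (eqv : G ≃ Fin (Fintype.card G)) (y : G) (f : Fin (Fintype.card G) → ℂ)
    (j : Fin (Fintype.card G)) :
    ((regMod hψ eqv).ρ y f) j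
      = ((ψ y (y⁻¹ * eqv.symm j) : ℂˣ) : ℂ) * f (eqv (y⁻¹ * eqv.symm j)) := rfl

lemma regMod_Bop_ne_zero (hψ : IsTwoCocycle ψ) [Fintype G]
    (eqv : G ≃ Fin (Fintype.card G)) {g : G} (hreg : IsPsiRegular ψ g) :
    (regMod hψ eqv).Bop g ≠ 0 := by
  classical
  set τ := regMod hψ eqv with hτ
  set e1 : Fin (Fintype.card G) → ℂ := fun j => if j = eqv 1 then 1 else 0 with he1
  -- value of `ρ y e1` at coordinate `eqv g`
  have hval : ∀ y : G, (τ.ρ y e1) (eqv g) =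
      if y = g then ((ψ 1 1 : ℂˣ) : ℂ) else 0 := by
    intro y
    show ((regMod hψ eqv).ρ y e1) (eqv g) = _
    rw [regMod_rho_apply hψ eqv, Equiv.symm_apply_apply]
    by_cases hy : y = g
    · subst hy
      simp [he1, inv_mul_cancel, psi_one_right hψ y]
    · have hne1 : ¬ (eqv (y⁻¹ * g) = eqv 1) := by
        simp only [EmbeddingLike.apply_eq_iff_eq, inv_mul_eq_one]
        exact fun hcontra => hy hcontra
      simp [he1, hne1, hy]
  -- conjTerm is exactly ρ g for commuting h
  have hterm : ∀ h : G, g * h = h * g → τ.conjTerm h (τ.ρ g) = τ.ρ g := by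
    intro h hc
    rw [conjTerm, τ.mul_eq h g, smul_mul_assoc, τ.mul_eq (h*g) h⁻¹,
      show h*g*h⁻¹ = g by rw [← hc]; group, smul_smul, smul_smul]
    have hr : ψ g h = ψ h g := hreg h (Subgroup.mem_centralizer_iff.2 (by
      rintro x rfl; exact hc))
    have hk := congrArg Units.val (psi_key_comm hψ hc)
    rw [hr] at hk
    push_cast at hk
    have hone : (((ψ h h⁻¹ * ψ 1 1)⁻¹ : ℂˣ) : ℂ) * ((ψ h g : ℂˣ) : ℂ) * ((ψ (h*g) h⁻¹ : ℂˣ) : ℂ) = 1 := by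
      rw [mul_assoc, hk, ← Units.val_mul, ← Units.val_mul, inv_mul_cancel, Units.val_one]
    rw [hone, one_smul]
  intro hB0
  have hzero : τ.Bop g e1 (eqv g) = 0 := by rw [hB0]; rfl
  erw [Bop, LinearMap.sum_apply, Finset.sum_apply] at hzero
  have hsum : ∀ h : G, (τ.conjTerm h (τ.ρ g) e1) (eqv g)
      = if g * h = h * g then ((ψ 1 1 : ℂˣ) : ℂ) else 0 := by
    intro h
    by_cases hc : g * h = h * g
    · rw [hterm h hc, hval g, if_pos rfl, if_pos hc]
    · rw [if_neg hc]
      rw [conjTerm, τ.mul_eq h g, smul_mul_assoc, τ.mul_eq (h*g) h⁻¹, smul_smul, smul_smul]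
      erw [LinearMap.smul_apply, Pi.smul_apply, hval (h*g*h⁻¹)]
      rw [if_neg (show ¬ (h*g*h⁻¹ = g) by
        intro hcontra
        apply hc
        conv_lhs => rw [← hcontra]
        group)]
      simp
  rw [Finset.sum_congr rfl (fun h _ => hsum h)] at hzero
  rw [← Finset.sum_filter] at hzero
  have hne : ((Finset.univ.filter (fun h : G => g * h = h * g)).card : ℂ)
      * ((ψ 1 1 : ℂˣ) : ℂ) ≠ 0 := by
    apply mul_ne_zero
    · have : (1 : G) ∈ Finset.univ.filter (fun h : G => g * h = h * g) := by simp
      have hpos : 0 < (Finset.univ.filter (fun h : G => g * h = h * g)).card :=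
        Finset.card_pos.2 ⟨1, this⟩
      exact_mod_cast Nat.cast_ne_zero.2 hpos.ne'
    · exact Units.ne_zero _
  apply hne
  rw [← hzero, Finset.sum_const, nsmul_eq_mul]

end TwistedGroupAlgebraModule
namespace TwistedGroupAlgebraModule
variable {G : Type*} [Group G] {ψ : G → G → ℂˣ}

lemma main_ind [Fintype G] (hψ : IsTwoCocycle ψ) (g : G) :
    ∀ n : ℕ, ∀ τ : TwistedGroupAlgebraModule G ψ, Module.finrank ℂ τ.V ≤ n →
      τ.Bop g ≠ 0 →
      ∃ σ : TwistedGroupAlgebraModule G ψ, σ.Irreducible ∧ σ.char g ≠ 0 := by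
  intro n
  induction n with
  | zero =>
    intro τ h0 hB
    exfalso
    apply hB
    have hsub : Subsingleton τ.V :=
      (Module.finrank_zero_iff (R := ℂ) (M := τ.V)).1 (Nat.le_zero.1 h0)
    exact LinearMap.ext fun v => Subsingleton.elim _ _
  | succ n ih =>
    intro τ hle hB
    by_cases hirr : ∀ p : Submodule ℂ τ.V, (∀ k : G, p.map (τ.ρ k) ≤ p) → p = ⊥ ∨ p = ⊤
    · obtain ⟨v, hv⟩ : ∃ v, τ.Bop g v ≠ 0 := by
        by_contra hcon
        push_neg at hcon
        exact hB (LinearMap.ext fun v => by simpa using hcon v)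
      have hnt : Nontrivial τ.V := nontrivial_of_ne (τ.Bop g v) 0 hv
      have hIrr : τ.Irreducible := ⟨hnt, hirr⟩
      obtain ⟨lam, hlam⟩ :=
        τ.central_scalar hIrr (τ.Bop g) (fun k => rho_comm_Bop hψ τ g k)
      have hlam0 : lam ≠ 0 := by
        rintro rfl
        rw [zero_smul] at hlam
        exact hB hlam
      refine ⟨τ, hIrr, ?_⟩
      have htr := trace_Bop hψ τ g
      rw [hlam, map_smul, LinearMap.trace_one, smul_eq_mul] at htr
      intro hchar
      rw [hchar, mul_zero] at htr
      have hfr : (Module.finrank ℂ τ.V : ℂ) ≠ 0 :=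
        Nat.cast_ne_zero.2 Module.finrank_pos.ne'
      exact (mul_ne_zero hlam0 hfr) htr
    · push_neg at hirr
      obtain ⟨p, hpinv, hpbot, hptop⟩ := hirr
      obtain ⟨q, hqinv, hinf, hsup⟩ := exists_invariant_compl hψ τ p hpinv
      have hq_top : q ≠ ⊤ := by
        intro hq
        rw [hq, inf_top_eq] at hinf
        exact hpbot hinf
      by_cases hbp : ∃ x ∈ p, τ.Bop g x ≠ 0
      · obtain ⟨x, hxp, hx⟩ := hbp
        refine ih (τ.resMod p hpinv) ?_ ?_
        · have h1 : Module.finrank ℂ ↥p < Module.finrank ℂ τ.V :=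
            Submodule.finrank_lt hptop
          have : Module.finrank ℂ (τ.resMod p hpinv).V = Module.finrank ℂ ↥p := rfl
          omega
        · intro h0
          apply hx
          have h1 := LinearMap.congr_fun h0 ⟨x, hxp⟩
          have h2 := congrArg p.subtype h1
          rw [resMod_Bop_apply] at h2
          simp at h2; exact h2
      · push_neg at hbp
        have hbq : ∃ x ∈ q, τ.Bop g x ≠ 0 := by
          obtain ⟨v, hv⟩ : ∃ v, τ.Bop g v ≠ 0 := by
            by_contra hcon
            push_neg at hcon
            exact hB (LinearMap.ext fun v => by simpa using hcon v)
          have hvmem : v ∈ p ⊔ q := hsup ▸ Submodule.mem_top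
          obtain ⟨a, ha, b, hb, rfl⟩ := Submodule.mem_sup.1 hvmem
          refine ⟨b, hb, ?_⟩
          intro hb0
          apply hv
          rw [map_add, hbp a ha, hb0, add_zero]
        obtain ⟨x, hxq, hx⟩ := hbq
        refine ih (τ.resMod q hqinv) ?_ ?_
        · have h1 : Module.finrank ℂ ↥q < Module.finrank ℂ τ.V :=
            Submodule.finrank_lt hq_top
          have : Module.finrank ℂ (τ.resMod q hqinv).V = Module.finrank ℂ ↥q := rfl
          omega
        · intro h0
          apply hx
          have h1 := LinearMap.congr_fun h0 ⟨x, hxq⟩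
          have h2 := congrArg q.subtype h1
          rw [resMod_Bop_apply] at h2
          simp at h2; exact h2

end TwistedGroupAlgebraModule

/-- An element `g` of a finite group `G` is `ψ`-regular if and only if
`χ_τ(g) ≠ 0` for some finite-dimensional irreducible `ℂ_ψ G`-module `τ`. -/
theorem isPsiRegular_iff_exists_irreducible_char_ne_zero {G : Type*} [Group G]
    [Finite G] (ψ : G → G → ℂˣ) (hψ : IsTwoCocycle ψ) (g : G) :
    IsPsiRegular ψ g ↔
      ∃ τ : TwistedGroupAlgebraModule G ψ, τ.Irreducible ∧ τ.char g ≠ 0 := by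
  constructor
  · intro hreg
    haveI : Fintype G := Fintype.ofFinite G
    let eqv : G ≃ Fin (Fintype.card G) := Fintype.equivFin G
    exact TwistedGroupAlgebraModule.main_ind hψ g
      (Module.finrank ℂ (TwistedGroupAlgebraModule.regMod hψ eqv).V)
      (TwistedGroupAlgebraModule.regMod hψ eqv) le_rfl
      (TwistedGroupAlgebraModule.regMod_Bop_ne_zero hψ eqv hreg)
  · rintro ⟨τ, _, hchar⟩ h hmem
    have hc : g * h = h * g := Subgroup.mem_centralizer_iff.1 hmem g rfl
    -- trace computation
    have e1 : τ.ρ h * τ.ρ g * τ.ρ h⁻¹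
        = (((ψ h g : ℂˣ) : ℂ) * ((ψ (h*g) h⁻¹ : ℂˣ) : ℂ)) • τ.ρ g := by
      rw [τ.mul_eq h g, smul_mul_assoc, τ.mul_eq (h*g) h⁻¹,
        show h*g*h⁻¹ = g by rw [← hc]; group, smul_smul]
    have e2 := TwistedGroupAlgebraModule.trace_conjTerm hψ τ h (τ.ρ g)
    rw [TwistedGroupAlgebraModule.conjTerm, map_smul, smul_eq_mul] at e2
    -- e2 : c⁻¹ * trace (ρh * ρg * ρh⁻¹) = trace (ρ g)
    rw [e1, map_smul, smul_eq_mul] at e2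
    have hkey := congrArg Units.val (psi_key_comm hψ hc)
    push_cast at hkey
    have hχ : LinearMap.trace ℂ τ.V (τ.ρ g) ≠ 0 := hchar
    have e2' := congrArg (fun z => (((ψ h h⁻¹ * ψ 1 1 : ℂˣ)) : ℂ) * z) e2
    rw [← mul_assoc, ← Units.val_mul, mul_inv_cancel, Units.val_one, one_mul] at e2'
    have e5 : ((ψ h g : ℂˣ) : ℂ) = ((ψ g h : ℂˣ) : ℂ) := by
      have h1 : ((ψ (h*g) h⁻¹ : ℂˣ) : ℂ) * LinearMap.trace ℂ τ.V (τ.ρ g) ≠ 0 :=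
        mul_ne_zero (Units.ne_zero _) hχ
      apply mul_right_cancel₀ h1
      push_cast at e2' ⊢
      linear_combination e2' - (LinearMap.trace ℂ τ.V (τ.ρ g)) * hkey
    exact (Units.ext e5).symm
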